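/- arXiv:1806.09618 — 3 statements merged into one kernel-verified Lean document; each statement's English description precedes it below -/
import Mathlib

section
/- Let σ > 0 be a real number, let N be a positive integer, let λ : ℕ → ℝ satisfy λ_t > 0 for all t, and let η : ℕ → ℝ satisfy Σ_t η_t² < ∞. Define h*_t = λ_t·η_t/(λ_t + σ²/N). Then both series Σ_t (η_t − h*_t)² and Σ_t (h*_t)²/λ_t converge, and for every h : ℕ → ℝ for which the series Σ_t (η_t − h_t)² and Σ_t h_t²/λ_t both converge, one has (N/(2σ²))·Σ_t (η_t − h*_t)² + (1/2)·Σ_t (h*_t)²/λ_t ≤ (N/(2σ²))·Σ_t (η_t − h_t)² + (1/2)·Σ_t h_t²/λ_t, with equality if and only if h_t = h*_t for all t. -/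
/-- Coordinatewise completion-of-the-square identity. -/
lemma key_id (c l e x : ℝ) (hc : 0 < c) (hl : 0 < l) :
    (1/(2*c)) * (e - x)^2 + x^2/(2*l)
      = (1/(2*c)) * (e - l*e/(l+c))^2 + (l*e/(l+c))^2/(2*l)
        + (1/(2*c) + 1/(2*l)) * (x - l*e/(l+c))^2 := by
  have h1 : l + c ≠ 0 := by positivity
  field_simp
  ring

/-- The coordinatewise minimizer `h*_t = λ_t·η_t/(λ_t + σ²/N)` globally minimizes the
regularized functional `J[h] = (N/(2σ²))·Σ_t (η_t − h_t)² + (1/2)·Σ_t h_t²/λ_t`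
over all `h` for which both series converge, and uniquely so. -/
theorem stmt_1 (sigma : ℝ) (hsigma : 0 < sigma) (N : ℕ) (hN : 0 < N)
    (lam : ℕ → ℝ) (hlam : ∀ t, 0 < lam t)
    (eta : ℕ → ℝ) (heta : Summable (fun t => (eta t) ^ 2))
    (hstar : ℕ → ℝ)
    (hhstar : ∀ t, hstar t = lam t * eta t / (lam t + sigma ^ 2 / N)) :
    Summable (fun t => (eta t - hstar t) ^ 2) ∧
    Summable (fun t => (hstar t) ^ 2 / lam t) ∧
    ∀ h : ℕ → ℝ,
      Summable (fun t => (eta t - h t) ^ 2) →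
      Summable (fun t => (h t) ^ 2 / lam t) →
      (((N : ℝ) / (2 * sigma ^ 2)) * (∑' t, (eta t - hstar t) ^ 2)
          + (1 / 2) * (∑' t, (hstar t) ^ 2 / lam t)
        ≤ ((N : ℝ) / (2 * sigma ^ 2)) * (∑' t, (eta t - h t) ^ 2)
          + (1 / 2) * (∑' t, (h t) ^ 2 / lam t)) ∧
      (((N : ℝ) / (2 * sigma ^ 2)) * (∑' t, (eta t - hstar t) ^ 2)
          + (1 / 2) * (∑' t, (hstar t) ^ 2 / lam t)
        = ((N : ℝ) / (2 * sigma ^ 2)) * (∑' t, (eta t - h t) ^ 2)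
          + (1 / 2) * (∑' t, (h t) ^ 2 / lam t)
        ↔ ∀ t, h t = hstar t) := by
  set c : ℝ := sigma ^ 2 / N with hcdef
  have hc : 0 < c := by positivity
  have hlc : ∀ t, 0 < lam t + c := fun t => add_pos (hlam t) hc
  -- η − h* = c·η/(λ+c)
  have hdiff : ∀ t, eta t - hstar t = c * eta t / (lam t + c) := by
    intro t
    rw [hhstar t]
    have := (hlc t).ne'
    field_simp
    ring
  -- Summability of (η − h*)²
  have S1 : Summable (fun t => (eta t - hstar t) ^ 2) := by
    apply Summable.of_nonneg_of_le (fun t => by positivity) (fun t => ?_) heta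
    rw [hdiff t]
    have h1 : (c * eta t / (lam t + c)) ^ 2 = (c / (lam t + c)) ^ 2 * eta t ^ 2 := by
      field_simp
    rw [h1]
    have h2 : (c / (lam t + c)) ^ 2 ≤ 1 := by
      have h3 : c / (lam t + c) ≤ 1 := by
        rw [div_le_one (hlc t)]; linarith [hlam t]
      have h4 : 0 ≤ c / (lam t + c) := le_of_lt (div_pos hc (hlc t))
      nlinarith
    nlinarith [sq_nonneg (eta t)]
  -- Summability of (h*)²/λ
  have S2 : Summable (fun t => (hstar t) ^ 2 / lam t) := by
    apply Summable.of_nonneg_of_le (fun t => by have := hlam t; positivity) (fun t => ?_)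
      (heta.mul_left (1 / (4 * c)))
    rw [hhstar t]
    have hl := hlam t
    have h1 : (lam t * eta t / (lam t + c)) ^ 2 / lam t
        = (lam t / (lam t + c) ^ 2) * eta t ^ 2 := by
      field_simp
    rw [h1]
    have h2 : lam t / (lam t + c) ^ 2 ≤ 1 / (4 * c) := by
      rw [div_le_div_iff₀ (by positivity) (by positivity)]
      nlinarith [sq_nonneg (lam t - c)]
    nlinarith [sq_nonneg (eta t)]
  refine ⟨S1, S2, fun h Sh1 Sh2 => ?_⟩
  -- rewrite the coefficient
  have hcoef : ((N : ℝ) / (2 * sigma ^ 2)) = 1 / (2 * c) := by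
    rw [hcdef]
    have hNne : (N : ℝ) ≠ 0 := Nat.cast_ne_zero.mpr hN.ne'
    field_simp
  -- per-coordinate functional
  set g : (ℕ → ℝ) → ℕ → ℝ :=
    fun f t => (1/(2*c)) * (eta t - f t)^2 + (f t)^2/(2*lam t) with hg
  have hgsum : ∀ f : ℕ → ℝ, Summable (fun t => (eta t - f t) ^ 2) →
      Summable (fun t => (f t) ^ 2 / lam t) → Summable (g f) := by
    intro f s1 s2
    apply Summable.add (s1.mul_left _)
    have : (fun t => (f t)^2/(2*lam t)) = fun t => (1/2) * ((f t)^2 / lam t) := by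
      funext t; have := (hlam t).ne'; field_simp
    rw [this]
    exact s2.mul_left _
  have hJ : ∀ f : ℕ → ℝ, Summable (fun t => (eta t - f t) ^ 2) →
      Summable (fun t => (f t) ^ 2 / lam t) →
      ((N : ℝ) / (2 * sigma ^ 2)) * (∑' t, (eta t - f t) ^ 2)
        + (1 / 2) * (∑' t, (f t) ^ 2 / lam t) = ∑' t, g f t := by
    intro f s1 s2
    rw [hcoef, ← tsum_mul_left, ← tsum_mul_left,
      ← Summable.tsum_add (s1.mul_left _) (s2.mul_left _)]
    congr 1
    funext t
    have := (hlam t).ne'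
    simp only [hg]
    field_simp
  -- the quadratic remainder
  set d : ℕ → ℝ := fun t => (1/(2*c) + 1/(2*lam t)) * (h t - hstar t)^2 with hd
  have hdnonneg : ∀ t, 0 ≤ d t := fun t => by
    have := hlam t; positivity
  have hkey : ∀ t, g h t = g hstar t + d t := by
    intro t
    simp only [hg, hd, hhstar t]
    exact key_id c (lam t) (eta t) (h t) hc (hlam t)
  have hsumgh : Summable (g h) := hgsum h Sh1 Sh2
  have hsumgs : Summable (g hstar) := hgsum hstar S1 S2
  have hsumd : Summable d := by
    have : d = fun t => g h t - g hstar t := by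
      funext t; rw [hkey t]; ring
    rw [this]
    exact hsumgh.sub hsumgs
  have hsplit : ∑' t, g h t = (∑' t, g hstar t) + ∑' t, d t := by
    rw [← Summable.tsum_add hsumgs hsumd]
    exact tsum_congr hkey
  rw [hJ hstar S1 S2, hJ h Sh1 Sh2, hsplit]
  have htd : 0 ≤ ∑' t, d t := tsum_nonneg hdnonneg
  constructor
  · linarith
  · constructor
    · intro heq
      have hzero : ∑' t, d t = 0 := by linarith
      intro t
      have hle : d t ≤ ∑' t, d t :=
        Summable.le_tsum hsumd t (fun j _ => hdnonneg j)
      have hdt : d t = 0 := le_antisymm (hzero ▸ hle) (hdnonneg t)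
      have hpos : 0 < 1/(2*c) + 1/(2*lam t) := by
        have := hlam t; positivity
      have hdt2 : (1/(2*c) + 1/(2*lam t)) * (h t - hstar t)^2 = 0 := hdt
      rcases mul_eq_zero.mp hdt2 with h1 | h1
      · linarith
      · have := pow_eq_zero_iff (n := 2) (by norm_num) |>.mp h1
        linarith [sub_eq_zero.mp this]
    · intro hall
      have : d = fun _ => (0:ℝ) := by
        funext t
        simp [hd, hall t]
      rw [this, tsum_zero]
      ring
end

section
/- Let σ > 0 be a real number, let λ : ℕ → ℝ satisfy λ_t > 0 for all t, and let η : ℕ → ℝ satisfy Σ_t η_t² < ∞. For each positive integer N define H_N : ℕ → ℝ by H_N(t) = λ_t·η_t/(λ_t + σ²/N). Then Σ_t (H_N(t) − η_t)² converges for every N, and Σ_t (H_N(t) − η_t)² → 0 as N → ∞; i.e., H_N converges to η in the ℓ² sense. -/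
private lemma bound_aux (l c e : ℝ) (hl : 0 < l) (hc : 0 < c) :
    (l * e / (l + c) - e) ^ 2 ≤ e ^ 2 := by
  have hlc : 0 < l + c := by linarith
  have key : l * e / (l + c) - e = -e * (c / (l + c)) := by
    field_simp; ring
  rw [key]
  have h1 : c / (l + c) ≤ 1 := by
    rw [div_le_one hlc]; linarith
  have h2 : 0 ≤ c / (l + c) := le_of_lt (div_pos hc hlc)
  have h3 : (c / (l + c)) ^ 2 ≤ 1 := pow_le_one₀ h2 h1
  nlinarith [sq_nonneg e]

/-- The GPR prediction converges to the true interaction function in the ℓ² sense: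
with `H_N(t) = λ_t·η_t/(λ_t + σ²/N)`, the series `Σ_t (H_N(t) − η_t)²` converges for
every `N ≥ 1` and tends to `0` as `N → ∞`. -/
theorem stmt_3 (sigma : ℝ) (hsigma : 0 < sigma)
    (lam : ℕ → ℝ) (hlam : ∀ t, 0 < lam t)
    (eta : ℕ → ℝ) (heta : Summable (fun t => (eta t) ^ 2))
    (H : ℕ → ℕ → ℝ)
    (hH : ∀ N : ℕ, 0 < N → ∀ t, H N t = lam t * eta t / (lam t + sigma ^ 2 / N)) :
    (∀ N : ℕ, 0 < N → Summable (fun t => (H N t - eta t) ^ 2)) ∧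
    Filter.Tendsto (fun N : ℕ => ∑' t, (H N t - eta t) ^ 2)
      Filter.atTop (nhds 0) := by
  have hbound : ∀ N : ℕ, 0 < N → ∀ t, (H N t - eta t) ^ 2 ≤ (eta t) ^ 2 := by
    intro N hN t
    rw [hH N hN t]
    exact bound_aux (lam t) (sigma ^ 2 / N) (eta t) (hlam t)
      (div_pos (pow_pos hsigma 2) (by exact_mod_cast hN))
  have hsumm : ∀ N : ℕ, 0 < N → Summable (fun t => (H N t - eta t) ^ 2) := by
    intro N hN
    exact Summable.of_nonneg_of_le (fun t => sq_nonneg _) (hbound N hN) heta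
  refine ⟨hsumm, ?_⟩
  -- pointwise limit
  have hlim : ∀ t, Filter.Tendsto (fun N : ℕ => (H (N + 1) t - eta t) ^ 2)
      Filter.atTop (nhds 0) := by
    intro t
    have hden : Filter.Tendsto (fun N : ℕ => lam t + sigma ^ 2 / (N + 1 : ℕ))
        Filter.atTop (nhds (lam t)) := by
      have : Filter.Tendsto (fun N : ℕ => sigma ^ 2 / (N + 1 : ℕ))
          Filter.atTop (nhds 0) := by
        have h := tendsto_const_div_atTop_nhds_zero_nat (sigma ^ 2)
        exact h.comp (Filter.tendsto_add_atTop_nat 1)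
      simpa using (tendsto_const_nhds.add this)
    have hHt : Filter.Tendsto (fun N : ℕ => H (N + 1) t)
        Filter.atTop (nhds (eta t)) := by
      have : Filter.Tendsto (fun N : ℕ => lam t * eta t / (lam t + sigma ^ 2 / (N + 1 : ℕ)))
          Filter.atTop (nhds (lam t * eta t / lam t)) :=
        Filter.Tendsto.div tendsto_const_nhds hden (ne_of_gt (hlam t))
      have heq : lam t * eta t / lam t = eta t := by
        rw [mul_comm, mul_div_assoc, div_self (ne_of_gt (hlam t)), mul_one]
      rw [heq] at this
      refine this.congr fun N => ?_
      rw [hH (N + 1) (Nat.succ_pos N) t]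
    have h0 : Filter.Tendsto (fun N : ℕ => H (N + 1) t - eta t) Filter.atTop (nhds 0) := by
      simpa using hHt.sub (tendsto_const_nhds (x := eta t))
    simpa using h0.pow 2
  -- dominated convergence for tsum along the shifted sequence
  have hshift : Filter.Tendsto (fun N : ℕ => ∑' t, (H (N + 1) t - eta t) ^ 2)
      Filter.atTop (nhds 0) := by
    have h := tendsto_tsum_of_dominated_convergence (f := fun N t => (H (N + 1) t - eta t) ^ 2)
      (g := fun _ : ℕ => (0 : ℝ)) (bound := fun t => (eta t) ^ 2) heta hlim
      (Filter.Eventually.of_forall fun N t => by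
        rw [Real.norm_eq_abs, abs_of_nonneg (sq_nonneg _)]
        exact hbound (N + 1) (Nat.succ_pos N) t)
    simpa using h
  exact (Filter.tendsto_add_atTop_iff_nat 1).mp hshift
end

section
/- Let M be a positive integer, let A be an invertible M×M real matrix, let i be an index in {1, …, M}, let d ∈ ℝ^M, and let e denote the i-th standard basis vector of ℝ^M. Define the M×2 matrices U = [ e, (I − (1/2)·e eᵀ)·d ] and V = [ (I − (1/2)·e eᵀ)·d, e ], and assume the 2×2 matrix I₂ + Vᵀ A⁻¹ U is invertible. Then the matrix A' = A + e·dᵀ + d·eᵀ − d_i·e·eᵀ is invertible, and A'⁻¹ = A⁻¹ − A⁻¹ U (I₂ + Vᵀ A⁻¹ U)⁻¹ Vᵀ A⁻¹. -/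
open Matrix

/-- Correctness of the FO-GPR selective-forgetting update (Sherman–Morrison–Woodbury):
if `A` is invertible and `I₂ + VᵀA⁻¹U` is invertible, then
`A' = A + e·dᵀ + d·eᵀ − d_i·e·eᵀ` is invertible with
`A'⁻¹ = A⁻¹ − A⁻¹U(I₂ + VᵀA⁻¹U)⁻¹VᵀA⁻¹`. -/
theorem stmt_7 (M : ℕ) (hM : 0 < M)
    (A : Matrix (Fin M) (Fin M) ℝ) (hA : IsUnit A)
    (i : Fin M) (d : Fin M → ℝ)
    (e : Fin M → ℝ) (he : e = Pi.single i (1 : ℝ))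
    (w : Fin M → ℝ)
    (hw : w = ((1 : Matrix (Fin M) (Fin M) ℝ)
                - (1 / 2 : ℝ) • Matrix.vecMulVec e e).mulVec d)
    (U V : Matrix (Fin M) (Fin 2) ℝ)
    (hU : U = Matrix.of fun j k => if k = 0 then e j else w j)
    (hV : V = Matrix.of fun j k => if k = 0 then w j else e j)
    (hsmall : IsUnit ((1 : Matrix (Fin 2) (Fin 2) ℝ) + Vᵀ * A⁻¹ * U))
    (A' : Matrix (Fin M) (Fin M) ℝ)
    (hA' : A' = A + Matrix.vecMulVec e d + Matrix.vecMulVec d e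
      - d i • Matrix.vecMulVec e e) :
    IsUnit A' ∧
    A'⁻¹ = A⁻¹ - A⁻¹ * U *
      ((1 : Matrix (Fin 2) (Fin 2) ℝ) + Vᵀ * A⁻¹ * U)⁻¹ * Vᵀ * A⁻¹ := by
  have hPd : (Matrix.vecMulVec e e).mulVec d = d i • e := by
    ext j
    simp [Matrix.mulVec, Matrix.vecMulVec_apply, dotProduct, he, Pi.single_apply,
      Finset.mul_sum, mul_comm, mul_left_comm]
  have hwj : ∀ j, w j = d j - (1/2) * d i * e j := by
    intro j
    rw [hw, Matrix.sub_mulVec, Matrix.one_mulVec, Matrix.smul_mulVec, hPd]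
    simp [mul_assoc]
  have hUV : U * Vᵀ = Matrix.vecMulVec e w + Matrix.vecMulVec w e := by
    subst hU hV
    ext j k
    simp [Matrix.mul_apply, Fin.sum_univ_two, Matrix.vecMulVec_apply, mul_comm]
  have key : A' = A + U * (1 : Matrix (Fin 2) (Fin 2) ℝ) * Vᵀ := by
    rw [Matrix.mul_one, hUV, hA']
    ext j k
    have hji : e j * e j = e j := by
      rcases eq_or_ne j i with h | h <;> simp [he, Pi.single_apply, h]
    have hek1 : e j * e k * d i = e j * d k * e k := by
      rcases eq_or_ne k i with h | h <;> simp [he, Pi.single_apply, h] <;> ring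
    have hek2 : e j * e k * d i = d j * e j * e k := by
      rcases eq_or_ne j i with h | h <;> rcases eq_or_ne k i with h' | h' <;>
        simp [he, Pi.single_apply, h, h'] <;> ring
    simp only [Matrix.add_apply, Matrix.sub_apply, Matrix.smul_apply, smul_eq_mul,
      Matrix.vecMulVec_apply, hwj]
    nlinarith [hek1, hek2]
  have hC : IsUnit (1 : Matrix (Fin 2) (Fin 2) ℝ) := isUnit_one
  have hsmall' : IsUnit ((1 : Matrix (Fin 2) (Fin 2) ℝ)⁻¹ + Vᵀ * A⁻¹ * U) := by
    simpa using hsmall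
  constructor
  · rw [key]
    obtain ⟨iA⟩ := hA.nonempty_invertible
    obtain ⟨iS⟩ := hsmall.nonempty_invertible
    haveI : Invertible (1 : Matrix (Fin 2) (Fin 2) ℝ) := invertibleOne
    haveI : Invertible (⅟(1 : Matrix (Fin 2) (Fin 2) ℝ) + Vᵀ * ⅟A * U) := by
      rw [invOf_one, Matrix.invOf_eq_nonsing_inv]
      exact iS
    letI := Matrix.invertibleAddMulMul A U (1 : Matrix (Fin 2) (Fin 2) ℝ) Vᵀ
    exact isUnit_of_invertible _
  · rw [key, Matrix.add_mul_mul_inv_eq_sub A U _ Vᵀ hA hC hsmall']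
    simp
end
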